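/- If X is a metric space admitting a conical geodesic bicombing σ, then for any nonempty sets A, B ⊆ X, the Hausdorff distance between the closed convex hulls satisfies d_H(cco(A), cco(B)) ≤ d_H(A,B). -/

import Mathlib

/-- A set is σ-convex if it is closed under the bicombing σ for t ∈ [0,1]. -/
def SigmaConvex {X : Type*} [MetricSpace X] (σ : X → X → ℝ → X) (C : Set X) : Prop :=
  ∀ x ∈ C, ∀ y ∈ C, ∀ t ∈ Set.Icc (0:ℝ) 1, σ x y t ∈ C

/-- Closed σ-convex hull: intersection of all closed σ-convex sets containing A. -/
def cco {X : Type*} [MetricSpace X] (σ : X → X → ℝ → X) (A : Set X) : Set X :=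
  ⋂₀ {C : Set X | IsClosed C ∧ SigmaConvex σ C ∧ A ⊆ C}

lemma subset_cco {X : Type*} [MetricSpace X] (σ : X → X → ℝ → X) (A : Set X) :
    A ⊆ cco σ A := fun x hx => Set.mem_sInter.2 fun _ hC => hC.2.2 hx

/-- The thickening of a σ-convex set is σ-convex. -/
lemma sigmaConvex_thick {X : Type*} [MetricSpace X] (σ : X → X → ℝ → X)
    (hconical : ∀ a b c d : X, ∀ t ∈ Set.Icc (0:ℝ) 1,
      dist (σ a b t) (σ c d t) ≤ (1 - t) * dist a c + t * dist b d)
    (S : Set X) (hS : SigmaConvex σ S) (r : ENNReal) :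
    SigmaConvex σ {x | EMetric.infEdist x S ≤ r} := by
  intro x hx y hy t ht
  simp only [Set.mem_setOf_eq] at hx hy ⊢
  refine ENNReal.le_of_forall_pos_le_add fun δ hδ hr => ?_
  have hrd : r + δ ≠ ⊤ := by
    simp [hr.ne, ENNReal.coe_ne_top]
  have hltx : EMetric.infEdist x S < r + δ :=
    lt_of_le_of_lt hx (ENNReal.lt_add_right hr.ne (by exact_mod_cast hδ.ne'))
  have hlty : EMetric.infEdist y S < r + δ :=
    lt_of_le_of_lt hy (ENNReal.lt_add_right hr.ne (by exact_mod_cast hδ.ne'))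
  obtain ⟨a, haS, hax⟩ := EMetric.infEdist_lt_iff.1 hltx
  obtain ⟨b, hbS, hby⟩ := EMetric.infEdist_lt_iff.1 hlty
  set c : ℝ := (r + δ).toReal with hc
  have hofc : ENNReal.ofReal c = r + δ := ENNReal.ofReal_toReal hrd
  have hdax : dist x a < c := by
    rw [← hofc] at hax; exact edist_lt_ofReal.1 hax
  have hdby : dist y b < c := by
    rw [← hofc] at hby; exact edist_lt_ofReal.1 hby
  have hmem : σ a b t ∈ S := hS a haS b hbS t ht
  have hdist : dist (σ x y t) (σ a b t) ≤ c := by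
    have h := hconical x y a b t ht
    nlinarith [ht.1, ht.2, dist_nonneg (x := x) (y := a), dist_nonneg (x := y) (y := b)]
  calc EMetric.infEdist (σ x y t) S ≤ edist (σ x y t) (σ a b t) :=
        EMetric.infEdist_le_edist_of_mem hmem
    _ = ENNReal.ofReal (dist (σ x y t) (σ a b t)) := edist_dist _ _
    _ ≤ ENNReal.ofReal c := ENNReal.ofReal_le_ofReal hdist
    _ = r + δ := hofc

lemma cco_subset_thick {X : Type*} [MetricSpace X] (σ : X → X → ℝ → X)
    (hconical : ∀ a b c d : X, ∀ t ∈ Set.Icc (0:ℝ) 1,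
      dist (σ a b t) (σ c d t) ≤ (1 - t) * dist a c + t * dist b d)
    (A B : Set X) (r : ENNReal) (hr : EMetric.hausdorffEdist A B < r) :
    ∀ x ∈ cco σ A, EMetric.infEdist x (cco σ B) ≤ r := by
  have hsub : cco σ A ⊆ {x | EMetric.infEdist x (cco σ B) ≤ r} := by
    apply Set.sInter_subset_of_mem
    refine ⟨IsClosed.preimage EMetric.continuous_infEdist isClosed_Iic,
      sigmaConvex_thick σ hconical _ (fun x hx y hy t ht => Set.mem_sInter.2
        fun C hC => hC.2.1 x (hx C hC) y (hy C hC) t ht) r, fun a ha => ?_⟩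
    have h1 : EMetric.infEdist a B ≤ EMetric.hausdorffEdist A B :=
      EMetric.infEdist_le_hausdorffEdist_of_mem ha
    have h2 : EMetric.infEdist a (cco σ B) ≤ EMetric.infEdist a B :=
      EMetric.infEdist_anti (subset_cco σ B)
    exact le_trans h2 (le_trans h1 hr.le)
  exact fun x hx => hsub hx

/-- for a conical bicombing, d_H(cco A, cco B) ≤ d_H(A, B)
(Hausdorff distance taken in the extended reals, covering the infinite case). -/
theorem hausdorffEdist_cco_le {X : Type*} [MetricSpace X]
    (σ : X → X → ℝ → X)
    (h0 : ∀ x y, σ x y 0 = x) (h1 : ∀ x y, σ x y 1 = y)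
    (hgeo : ∀ x y, ∀ s ∈ Set.Icc (0:ℝ) 1, ∀ t ∈ Set.Icc (0:ℝ) 1,
      dist (σ x y s) (σ x y t) = |t - s| * dist x y)
    (hconical : ∀ a b c d : X, ∀ t ∈ Set.Icc (0:ℝ) 1,
      dist (σ a b t) (σ c d t) ≤ (1 - t) * dist a c + t * dist b d)
    (A B : Set X) (hA : A.Nonempty) (hB : B.Nonempty) :
    EMetric.hausdorffEdist (cco σ A) (cco σ B) ≤ EMetric.hausdorffEdist A B := by
  refine le_of_forall_gt_imp_ge_of_dense fun r hr => ?_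
  exact EMetric.hausdorffEdist_le_of_infEdist
    (cco_subset_thick σ hconical A B r hr)
    (cco_subset_thick σ hconical B A r (lt_of_eq_of_lt EMetric.hausdorffEdist_comm hr))
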